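/- Let A be any model of SAPP. Then the relation R₁ is an equivalence relation on A, there are infinitely many R₁-equivalence classes, and every R₁-equivalence class is infinite. -/

import Mathlib

open FirstOrder Language Structure BoundedFormula

/-- The relation symbols of the language `L`: a single binary relation `O`. -/
inductive PerpRel : ℕ → Type
  | o : PerpRel 2

/-- The first-order language with a single binary relation symbol `O`. -/
def L : Language := ⟨fun _ => Empty, PerpRel⟩
  deriving IsRelational

/-- The binary relation symbol `O` of `L`. -/
abbrev oSym : L.Relations 2 := .o

/-- `O(xᵢ, xⱼ)` as a bounded formula. -/
def oBF {n : ℕ} (i j : Fin n) : L.BoundedFormula Empty n :=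
  oSym.boundedFormula₂ (&i) (&j)

/-- Finite conjunction of a list of bounded formulas. -/
def andAll {n : ℕ} : List (L.BoundedFormula Empty n) → L.BoundedFormula Empty n
  | [] => ⊤
  | φ :: l => φ ⊓ andAll l

/-- λ₁ₙ : ∀y₁…∀yₙ∀s(O(s,y₁) ∧ … ∧ O(s,yₙ) → ∃t(t ≠ y₁ ∧ … ∧ t ≠ yₙ ∧ O(s,t))).
Variables: y₁,…,yₙ are de Bruijn indices 0,…,n-1, s is index n, t is index n+1. -/
def lam1 (n : ℕ) : L.Sentence :=
  ((andAll ((List.finRange n).map fun i => oBF (Fin.last n) i.castSucc)).imp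
    ((andAll ((List.finRange n).map fun i =>
        ∼((&(Fin.last (n + 1))) =' (&(i.castSucc.castSucc)))) ⊓
      oBF ((Fin.last n).castSucc) (Fin.last (n + 1))).ex)).alls

/-- λ₂ₙ : ∀y₁…∀yₙ∃s(¬O(s,y₁) ∧ … ∧ ¬O(s,yₙ)).
Variables: y₁,…,yₙ are de Bruijn indices 0,…,n-1, s is index n. -/
def lam2 (n : ℕ) : L.Sentence :=
  ((andAll ((List.finRange n).map fun i => ∼(oBF (Fin.last n) i.castSucc))).ex).alls

/-- λ₃ : ∀x ¬O(x,x). -/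
def lam3 : L.Sentence := (∼(oBF (0 : Fin 1) 0)).alls

/-- λ₄ : ∀x∀y(O(x,y) → O(y,x)). -/
def lam4 : L.Sentence := ((oBF (0 : Fin 2) 1).imp (oBF (1 : Fin 2) 0)).alls

/-- λ₅ : ∀x∃y O(x,y). -/
def lam5 : L.Sentence := ((oBF (0 : Fin 2) 1).ex).alls

/-- λ₆ : ∀x∀y∀z∀t(O(x,z) ∧ O(y,z) ∧ O(x,t) → O(y,t)). -/
def lam6 : L.Sentence :=
  ((oBF (0 : Fin 4) 2 ⊓ oBF (1 : Fin 4) 2 ⊓ oBF (0 : Fin 4) 3).imp (oBF (1 : Fin 4) 3)).alls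

/-- The theory SAPP. -/
def SAPP : L.Theory :=
  {φ | ∃ n, 1 ≤ n ∧ φ = lam1 n} ∪ {φ | ∃ n, 2 ≤ n ∧ φ = lam2 n} ∪ {lam3, lam4, lam5, lam6}

/-- The relation R₁ on a model of SAPP: `x R₁ y` iff for every `z`, `O(x,z)` implies `O(y,z)`. -/
def R1 {M : Type*} [L.Structure M] (x y : M) : Prop :=
  ∀ z : M, RelMap oSym ![x, z] → RelMap oSym ![y, z]

section Aux
variable {M : Type*} [L.Structure M]

local notation "O" => fun x y : M => RelMap oSym ![x, y]

lemma realize_andAll {n : ℕ} (l : List (L.BoundedFormula Empty n)) (v : Empty → M)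
    (xs : Fin n → M) : (andAll l).Realize v xs ↔ ∀ φ ∈ l, φ.Realize v xs := by
  induction l with
  | nil => simp [andAll]
  | cons φ l ih => simp [andAll, ih]

variable (h : M ⊨ SAPP)
include h

lemma osymm {x y : M} (hxy : RelMap oSym ![x, y]) : RelMap oSym ![y, x] := by
  have h4 := h.realize_of_mem lam4 (by simp [SAPP, Set.mem_union])
  rw [lam4, Sentence.Realize, realize_alls] at h4
  have := h4 ![x, y]
  rw [realize_imp] at this
  simp only [oBF, realize_rel₂, Term.realize_var, Sum.elim_inr] at this
  exact this hxy

lemma oex (x : M) : ∃ y, RelMap oSym ![x, y] := by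
  have h5 := h.realize_of_mem lam5 (by simp [SAPP, Set.mem_union])
  rw [lam5, Sentence.Realize, realize_alls] at h5
  have := h5 ![x]
  rw [realize_ex] at this
  obtain ⟨a, ha⟩ := this
  simp only [oBF, realize_rel₂, Term.realize_var, Sum.elim_inr] at ha
  exact ⟨a, by convert ha using 2 <;> simp [Fin.snoc]⟩

lemma o6 {x y z t : M} (hxz : RelMap oSym ![x, z]) (hyz : RelMap oSym ![y, z])
    (hxt : RelMap oSym ![x, t]) : RelMap oSym ![y, t] := by
  have h6 := h.realize_of_mem lam6 (by simp [SAPP, Set.mem_union])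
  rw [lam6, Sentence.Realize, realize_alls] at h6
  have := h6 ![x, y, z, t]
  rw [realize_imp, realize_inf, realize_inf] at this
  simp only [oBF, realize_rel₂, Term.realize_var, Sum.elim_inr] at this
  exact this ⟨⟨hxz, hyz⟩, hxt⟩

lemma o2 {n : ℕ} (hn : 2 ≤ n) (y : Fin n → M) : ∃ s : M, ∀ i, ¬ RelMap oSym ![s, y i] := by
  have h2 := h.realize_of_mem (lam2 n) (Set.mem_union_left _ (Set.mem_union_right _ ⟨n, hn, rfl⟩))
  rw [lam2, Sentence.Realize, realize_alls] at h2
  obtain ⟨s, hs⟩ := realize_ex.mp (h2 y)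
  rw [realize_andAll] at hs
  refine ⟨s, fun i => ?_⟩
  have := hs _ (List.mem_map_of_mem (List.mem_finRange i))
  rw [realize_not] at this
  simp only [oBF, realize_rel₂, Function.comp, Term.realize_var, Sum.elim_inr,
    Fin.snoc_last, Fin.snoc_castSucc] at this
  exact this

lemma o1 {n : ℕ} (hn : 1 ≤ n) (y : Fin n → M) (s : M) (hs : ∀ i, RelMap oSym ![s, y i]) :
    ∃ t : M, (∀ i, t ≠ y i) ∧ RelMap oSym ![s, t] := by
  have h1 := h.realize_of_mem (lam1 n) (Set.mem_union_left _ (Set.mem_union_left _ ⟨n, hn, rfl⟩))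
  rw [lam1, Sentence.Realize, realize_alls] at h1
  have := h1 (Fin.snoc y s)
  rw [realize_imp] at this
  have hprem : (andAll ((List.finRange n).map fun i =>
      oBF (Fin.last n) i.castSucc)).Realize default (Fin.snoc y s) := by
    rw [realize_andAll]
    intro φ hφ
    obtain ⟨i, _, rfl⟩ := List.mem_map.mp hφ
    simp only [oBF, realize_rel₂, Function.comp, Term.realize_var, Sum.elim_inr,
      Fin.snoc_last, Fin.snoc_castSucc]
    exact hs i
  obtain ⟨t, ht⟩ := realize_ex.mp (this hprem)
  rw [realize_inf, realize_andAll] at ht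
  obtain ⟨hne, hot⟩ := ht
  refine ⟨t, fun i => ?_, ?_⟩
  · have := hne _ (List.mem_map_of_mem (List.mem_finRange i))
    rw [realize_not, realize_bdEqual] at this
    simp only [Function.comp, Term.realize_var, Sum.elim_inr, Fin.snoc_last,
      Fin.snoc_castSucc] at this
    exact this
  · simp only [oBF, realize_rel₂, Function.comp, Term.realize_var, Sum.elim_inr,
      Fin.snoc_last, Fin.snoc_castSucc] at hot
    exact hot

end Aux

/-- in any model of SAPP, R₁ is an equivalence relation, there are infinitely
many R₁-equivalence classes, and every R₁-equivalence class is infinite. -/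
theorem statement_2 (M : Type*) [L.Structure M] [Nonempty M] (h : M ⊨ SAPP) :
    Equivalence (R1 (M := M)) ∧
      {s : Set M | ∃ x : M, s = {y : M | R1 x y}}.Infinite ∧
      (∀ x : M, {y : M | R1 x y}.Infinite) := by
  classical
  -- a choice of neighbor for each point
  let z : M → M := fun x => (oex h x).choose
  have hz : ∀ x : M, RelMap oSym ![x, z x] := fun x => (oex h x).choose_spec
  have hsymmR : ∀ x y : M, R1 x y → R1 y x := by
    intro x y hxy w hw
    exact o6 h (hxy _ (hz x)) (hz x) hw
  refine ⟨⟨fun x w hw => hw, fun {x y} hxy => hsymmR x y hxy,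
      fun {x y w} hxy hyw u hu => hyw u (hxy u hu)⟩, ?_, ?_⟩
  · -- infinitely many classes
    intro hfin
    let rep : Set M → M := fun t =>
      if ht : ∃ x : M, t = {y : M | R1 x y} then ht.choose else Classical.arbitrary M
    have hrep : ∀ t ∈ {s : Set M | ∃ x : M, s = {y : M | R1 x y}},
        t = {y : M | R1 (rep t) y} := by
      intro t ht
      have : rep t = ht.choose := dif_pos ht
      rw [this]; exact ht.choose_spec
    set lst : List M := hfin.toFinset.toList.map rep with hlst
    obtain ⟨s, hs⟩ := o2 h (n := lst.length + 2) (by omega)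
      (fun i => z (lst.getD i (Classical.arbitrary M)))
    have hnot : ∀ x ∈ lst, ¬ RelMap oSym ![s, z x] := by
      intro x hx
      obtain ⟨i, hi⟩ := List.mem_iff_get.mp hx
      have := hs ⟨i, by omega⟩
      simpa [List.getD, hi.symm, List.getElem?_eq_getElem i.isLt] using this
    have hcs : {y : M | R1 s y} ∈ {s : Set M | ∃ x : M, s = {y : M | R1 x y}} := ⟨s, rfl⟩
    have hmem : rep {y : M | R1 s y} ∈ lst := by
      rw [hlst]
      exact List.mem_map_of_mem (f := rep) (Finset.mem_toList.mpr (hfin.mem_toFinset.mpr hcs))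
    set x := rep {y : M | R1 s y} with hx
    have hxs : R1 x s := by
      have : s ∈ {y : M | R1 x y} := by
        rw [← hrep _ hcs]; exact fun w hw => hw
      exact this
    exact hnot x hmem (hxs _ (hz x))
  · -- every class infinite
    intro x hfin
    have hxmem : x ∈ {y : M | R1 x y} := fun w hw => hw
    set lst : List M := hfin.toFinset.toList with hlst
    have hlen : 1 ≤ lst.length := by
      have : x ∈ lst := Finset.mem_toList.mpr (hfin.mem_toFinset.mpr hxmem)
      exact List.length_pos_iff.mpr (List.ne_nil_of_mem this)
    have hOz : ∀ i : Fin lst.length, RelMap oSym ![z x, lst.get i] := by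
      intro i
      have hmem : lst.get i ∈ lst := List.get_mem lst i
      have hR : R1 x (lst.get i) := hfin.mem_toFinset.mp (Finset.mem_toList.mp hmem)
      exact osymm h (hR _ (hz x))
    obtain ⟨t, htne, hto⟩ := o1 h hlen (fun i => lst.get i) (z x) hOz
    have htmem : t ∈ {y : M | R1 x y} := by
      intro w hw
      exact o6 h (hz x) (osymm h hto) hw
    obtain ⟨i, hi⟩ := List.mem_iff_get.mp (Finset.mem_toList.mpr (hfin.mem_toFinset.mpr htmem))
    exact htne i hi.symm
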